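/- Let R be a commutative ring and x a set (or R-module basis). Let Sx = R[x] be the polynomial algebra (free commutative R-algebra) on x. Then for every k ≥ 0, restriction gives an R-module isomorphism from the module of differential operators on R[x] of order ≤ k to the module of R-linear maps from the span of monomials of degree ≤ k to R[x]. In particular, every R-linear map φ from the degree-≤-k part of R[x] to R[x] extends uniquely to a differential operator of order ≤ k on R[x]. -/

import Mathlib

/-- Differential operators of order at most `k` on a commutative `R`-algebra `A`, in the
inductive Koszul/Grothendieck sense. -/
def IsDiffOp {R A : Type*} [CommRing R] [CommRing A] [Algebra R A] :
    ℕ → (A →ₗ[R] A) → Prop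
  | 0, D => ∀ x y : A, D (x * y) = D x * y
  | k + 1, D => ∀ a : A,
      IsDiffOp k (D ∘ₗ LinearMap.mulLeft R a - LinearMap.mulLeft R a ∘ₗ D)

namespace DiffOpAux

variable {R A : Type*} [CommRing R] [CommRing A] [Algebra R A]

/-- Commutator of an operator with left-multiplication. -/
def comm (a : A) (D : A →ₗ[R] A) : A →ₗ[R] A :=
  D ∘ₗ LinearMap.mulLeft R a - LinearMap.mulLeft R a ∘ₗ D

@[simp] lemma comm_apply (a : A) (D : A →ₗ[R] A) (p : A) :
    comm a D p = D (a * p) - a * D p := rfl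

lemma isDiffOp_succ_iff {k : ℕ} {D : A →ₗ[R] A} :
    IsDiffOp (k + 1) D ↔ ∀ a : A, IsDiffOp k (comm a D) := Iff.rfl

lemma isDiffOp_zero_iff' {D : A →ₗ[R] A} :
    IsDiffOp 0 D ↔ ∀ a : A, comm a D = 0 := by
  constructor
  · intro h a
    ext y
    have h1 : D (a * y) = D y * a := by rw [mul_comm]; exact h y a
    simp [h1, mul_comm]
  · intro h p q
    have h1 := congrArg (fun E : A →ₗ[R] A => E p) (h q)
    simp only [comm_apply, LinearMap.zero_apply] at h1
    rw [mul_comm p q, sub_eq_zero.mp h1, mul_comm]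

lemma isDiffOp_zero (k : ℕ) : IsDiffOp k (0 : A →ₗ[R] A) := by
  induction k with
  | zero => intro p q; simp
  | succ k ih =>
    intro a
    show IsDiffOp k (comm a 0)
    have : comm a (0 : A →ₗ[R] A) = 0 := by ext p; simp
    rw [this]; exact ih

lemma isDiffOp_add {k : ℕ} {D E : A →ₗ[R] A} (hD : IsDiffOp k D) (hE : IsDiffOp k E) :
    IsDiffOp k (D + E) := by
  induction k generalizing D E with
  | zero => intro p q; simp [hD p q, hE p q, add_mul]
  | succ k ih =>
    intro a
    show IsDiffOp k (comm a (D + E))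
    have : comm a (D + E) = comm a D + comm a E := by ext p; simp; ring
    rw [this]; exact ih (hD a) (hE a)

lemma isDiffOp_mulLeft_comp {k : ℕ} {D : A →ₗ[R] A} (b : A) (hD : IsDiffOp k D) :
    IsDiffOp k (LinearMap.mulLeft R b ∘ₗ D) := by
  induction k generalizing D with
  | zero => intro p q; simp [hD p q, mul_assoc]
  | succ k ih =>
    intro a
    show IsDiffOp k (comm a (LinearMap.mulLeft R b ∘ₗ D))
    have : comm a (LinearMap.mulLeft R b ∘ₗ D) = LinearMap.mulLeft R b ∘ₗ comm a D := by
      ext p; simp; ring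
    rw [this]; exact ih (hD a)

lemma isDiffOp_comp_mulLeft {k : ℕ} {D : A →ₗ[R] A} (b : A) (hD : IsDiffOp k D) :
    IsDiffOp k (D ∘ₗ LinearMap.mulLeft R b) := by
  induction k generalizing D with
  | zero => intro p q; show D (b * (p*q)) = D (b*p) * q; rw [← mul_assoc]; exact hD _ _
  | succ k ih =>
    intro a
    show IsDiffOp k (comm a (D ∘ₗ LinearMap.mulLeft R b))
    have : comm a (D ∘ₗ LinearMap.mulLeft R b) = comm a D ∘ₗ LinearMap.mulLeft R b := by
      ext p; simp [mul_left_comm]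
    rw [this]; exact ih (hD a)

lemma isDiffOp_mono {k l : ℕ} (hkl : k ≤ l) {D : A →ₗ[R] A} (hD : IsDiffOp k D) :
    IsDiffOp l D := by
  induction l with
  | zero => exact Nat.le_zero.mp hkl ▸ hD
  | succ l ih =>
    rcases Nat.lt_or_ge k (l + 1) with h | h
    · have hDl : IsDiffOp l D := ih (Nat.lt_succ_iff.mp h)
      -- show each commutator has order ≤ l
      clear ih hD hkl h
      induction l generalizing D with
      | zero =>
        intro a
        show IsDiffOp 0 (comm a D)
        rw [isDiffOp_zero_iff'.mp hDl a]
        exact isDiffOp_zero 0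
      | succ l ih =>
        intro a
        exact ih (hDl a)
    · exact (Nat.le_antisymm hkl h) ▸ hD

lemma isDiffOp_sub {k : ℕ} {D E : A →ₗ[R] A} (hD : IsDiffOp k D) (hE : IsDiffOp k E) :
    IsDiffOp k (D - E) := by
  have hnegE : IsDiffOp k (-E) := by
    have := isDiffOp_mulLeft_comp (R := R) (-1 : A) hE
    have h2 : LinearMap.mulLeft R (-1 : A) ∘ₗ E = -E := by ext p; simp
    rwa [h2] at this
  have := isDiffOp_add hD hnegE
  rwa [sub_eq_add_neg]

end DiffOpAux

namespace DiffOpAux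

variable {R A : Type*} [CommRing R] [CommRing A] [Algebra R A]

lemma comm_algebraMap (r : R) (D : A →ₗ[R] A) : comm (algebraMap R A r) D = 0 := by
  ext p
  simp [Algebra.smul_def, map_smul D, mul_smul_comm, smul_mul_assoc,
    ← Algebra.smul_def]

lemma comm_add (a b : A) (D : A →ₗ[R] A) : comm (a + b) D = comm a D + comm b D := by
  ext p; simp [add_mul]; ring

lemma comm_mul (a b : A) (D : A →ₗ[R] A) :
    comm (a * b) D = comm a D ∘ₗ LinearMap.mulLeft R b + LinearMap.mulLeft R a ∘ₗ comm b D := by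
  ext p; simp; ring

/-- To check the order-`k+1` condition it suffices to check commutators with a
generating set of the algebra. -/
lemma isDiffOp_succ_of_generators {k : ℕ} {D : A →ₗ[R] A} (S : Set A)
    (hS : Algebra.adjoin R S = ⊤)
    (h : ∀ a ∈ S, IsDiffOp k (comm a D)) : IsDiffOp (k + 1) D := by
  rw [isDiffOp_succ_iff]
  intro a
  have ha : a ∈ Algebra.adjoin R S := hS ▸ Algebra.mem_top
  induction ha using Algebra.adjoin_induction with
  | mem b hb => exact h b hb
  | algebraMap r => rw [comm_algebraMap]; exact isDiffOp_zero k
  | add b c hb hc ihb ihc => rw [comm_add]; exact isDiffOp_add ihb ihc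
  | mul b c hb hc ihb ihc =>
    rw [comm_mul]
    exact isDiffOp_add (isDiffOp_comp_mulLeft _ ihb) (isDiffOp_mulLeft_comp _ ihc)

/-- Iterated commutators along a list. -/
def foldComm : List A → (A →ₗ[R] A) → (A →ₗ[R] A)
  | [], D => D
  | a :: l, D => foldComm l (comm a D)

lemma isDiffOp_iff_foldComm {k : ℕ} {D : A →ₗ[R] A} :
    IsDiffOp k D ↔ ∀ l : List A, l.length = k + 1 → foldComm l D = 0 := by
  induction k generalizing D with
  | zero =>
    rw [isDiffOp_zero_iff']
    constructor
    · rintro h (_ | ⟨a, (_ | ⟨b, l⟩)⟩) hl <;> simp at hl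
      show foldComm [] (comm a D) = 0
      exact h a
    · intro h a
      exact h [a] rfl
  | succ k ih =>
    rw [isDiffOp_succ_iff]
    constructor
    · rintro h (_ | ⟨a, l⟩) hl
      · simp at hl
      · simp only [List.length_cons, Nat.succ_inj] at hl
        exact (ih.mp (h a)) l hl
    · intro h a
      rw [ih]
      intro l hl
      exact h (a :: l) (by simp [hl])

/-- `foldComm l D p` only depends on the values of `D` on sublist-products of `l` times `p`. -/
lemma foldComm_congr {D₁ D₂ : A →ₗ[R] A} :
    ∀ (l : List A) (p : A),
      (∀ s : List A, s.Sublist l → D₁ (s.prod * p) = D₂ (s.prod * p)) →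
      foldComm l D₁ p = foldComm l D₂ p := by
  intro l
  induction l generalizing D₁ D₂ with
  | nil =>
    intro p h
    have := h [] (List.Sublist.refl _)
    simpa [foldComm] using this
  | cons a l ih =>
    intro p h
    show foldComm l (comm a D₁) p = foldComm l (comm a D₂) p
    refine ih p fun s hs => ?_
    have h1 := h (a :: s) (hs.cons₂ a)
    have h2 := h s (hs.cons a)
    simp only [List.prod_cons, mul_assoc] at h1
    simp [h1, h2]

end DiffOpAux

namespace MvDiffOp

open MvPolynomial DiffOpAux

variable {R : Type*} [CommRing R] {x : Type*}

/-- Total degree of an exponent. -/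
def deg (α : x →₀ ℕ) : ℕ := α.sum fun _ n => n

lemma deg_eq_zero_iff {α : x →₀ ℕ} : deg α = 0 ↔ α = 0 := by
  constructor
  · intro h
    ext i
    rw [Finsupp.coe_zero, Pi.zero_apply]
    by_contra hi
    have hmem : i ∈ α.support := Finsupp.mem_support_iff.mpr hi
    have hle : α i ≤ ∑ j ∈ α.support, α j :=
      Finset.single_le_sum (fun j _ => Nat.zero_le _) hmem
    have h' : ∑ j ∈ α.support, α j = 0 := h
    omega
  · rintro rfl; simp [deg]

lemma deg_add (α β : x →₀ ℕ) : deg (α + β) = deg α + deg β := by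
  simp [deg, Finsupp.sum_add_index']

lemma deg_single (i : x) (n : ℕ) : deg (Finsupp.single i n) = n := by
  simp [deg, Finsupp.sum_single_index]

lemma deg_sub_single_add_one {α : x →₀ ℕ} {i : x} (hi : α i ≠ 0) :
    deg (α - Finsupp.single i 1) + 1 = deg α := by
  have h1 : Finsupp.single i 1 ≤ α := by
    rw [Finsupp.single_le_iff]
    omega
  have h2 : α - Finsupp.single i 1 + Finsupp.single i 1 = α := tsub_add_cancel_of_le h1
  calc deg (α - Finsupp.single i 1) + 1
      = deg (α - Finsupp.single i 1) + deg (Finsupp.single i 1) := by rw [deg_single]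
    _ = deg (α - Finsupp.single i 1 + Finsupp.single i 1) := (deg_add _ _).symm
    _ = deg α := by rw [h2]

lemma deg_mono {α β : x →₀ ℕ} (h : α ≤ β) : deg α ≤ deg β := by
  have h3 : deg β = deg (β - α) + deg α := by
    conv_lhs => rw [← tsub_add_cancel_of_le h]
    rw [deg_add]
  omega

lemma deg_lt_of_lt {α β : x →₀ ℕ} (h : α ≤ β) (hne : α ≠ β) : deg α < deg β := by
  have h2 : β - α + α = β := tsub_add_cancel_of_le h
  have h3 : deg β = deg (β - α) + deg α := by
    conv_lhs => rw [← h2]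
    rw [deg_add]
  have h4 : β - α ≠ 0 := by
    intro h0
    rw [h0, zero_add] at h2
    exact hne h2
  have h5 : deg (β - α) ≠ 0 := fun h0 => h4 (deg_eq_zero_iff.mp h0)
  omega

/-- Product of binomial coefficients `∏ᵢ (βᵢ choose αᵢ)`. -/
def binom (β α : x →₀ ℕ) : ℕ := α.prod fun i n => (β i).choose n

lemma binom_eq_prod (β α : x →₀ ℕ) {s : Finset x} (hs : α.support ⊆ s) :
    binom β α = ∏ j ∈ s, (β j).choose (α j) :=
  Finsupp.prod_of_support_subset α hs _ (fun i _ => by simp)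

lemma binom_self (α : x →₀ ℕ) : binom α α = 1 := by
  simp [binom, Finsupp.prod]

lemma binom_eq_zero {β α : x →₀ ℕ} (h : ¬ α ≤ β) : binom β α = 0 := by
  rw [Finsupp.le_iff] at h
  push_neg at h
  obtain ⟨i, hi, hlt⟩ := h
  exact Finset.prod_eq_zero hi (Nat.choose_eq_zero_of_lt hlt)

end MvDiffOp

namespace MvDiffOp

open MvPolynomial DiffOpAux

variable {R : Type*} [CommRing R] {x : Type*}

/-- Multivariate Hasse derivative. -/
noncomputable def hasse (α : x →₀ ℕ) : MvPolynomial x R →ₗ[R] MvPolynomial x R :=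
  (basisMonomials x R).constr ℕ fun β => monomial (β - α) ((binom β α : R))

lemma hasse_monomial_one (α β : x →₀ ℕ) :
    hasse (R := R) α (monomial β 1) = monomial (β - α) ((binom β α : R)) := by
  have := (basisMonomials x R).constr_basis ℕ
    (fun β => monomial (β - α) ((binom β α : R))) β
  rwa [show (basisMonomials x R) β = monomial β 1 from congrFun (coe_basisMonomials x R) β] at this

lemma hasse_monomial (α β : x →₀ ℕ) (r : R) :
    hasse (R := R) α (monomial β r) = monomial (β - α) ((binom β α : R) * r) := by
  have h1 : monomial β r = r • monomial β (1 : R) := by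
    rw [smul_monomial, smul_eq_mul, mul_one]
  rw [h1, map_smul, hasse_monomial_one, smul_monomial, smul_eq_mul, mul_comm]

lemma hasse_zero_exp : hasse (R := R) (0 : x →₀ ℕ) = LinearMap.id := by
  apply (basisMonomials x R).ext
  intro β
  rw [show (basisMonomials x R) β = monomial β 1 from congrFun (coe_basisMonomials x R) β]
  rw [hasse_monomial_one]
  simp [binom, Finsupp.prod]

lemma comm_X_hasse (i : x) (α : x →₀ ℕ) :
    comm (X i) (hasse (R := R) α)
      = if α i = 0 then 0 else hasse (α - Finsupp.single i 1) := by
  classical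
  apply (basisMonomials x R).ext
  intro β
  rw [show (basisMonomials x R) β = monomial β 1 from congrFun (coe_basisMonomials x R) β]
  have hXmul : (X i : MvPolynomial x R) * monomial β 1 = monomial (Finsupp.single i 1 + β) 1 := by
    rw [X, monomial_mul, one_mul]
  rw [comm_apply, hXmul, hasse_monomial_one, hasse_monomial_one, X, monomial_mul, one_mul]
  by_cases hα : α i = 0
  · rw [if_pos hα]
    have hexp : Finsupp.single i 1 + β - α = Finsupp.single i 1 + (β - α) := by
      ext j
      simp only [Finsupp.tsub_apply, Finsupp.add_apply]
      rcases eq_or_ne j i with rfl | hj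
      · simp [Finsupp.single_eq_same, hα]
      · simp [Finsupp.single_eq_of_ne' (Ne.symm hj)]
    have hcoef : binom (Finsupp.single i 1 + β) α = binom β α := by
      unfold binom
      apply Finsupp.prod_congr
      intro j hj
      have hji : j ≠ i := by
        rintro rfl
        exact (Finsupp.mem_support_iff.mp hj) hα
      simp [Finsupp.single_eq_of_ne' (Ne.symm hji)]
    rw [hexp, hcoef]
    simp
  · rw [if_neg hα, hasse_monomial_one]
    obtain ⟨m, hm⟩ : ∃ m, α i = m + 1 := ⟨α i - 1, by omega⟩
    -- exponent identity
    have hexp : Finsupp.single i 1 + β - α = β - (α - Finsupp.single i 1) := by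
      ext j
      simp only [Finsupp.tsub_apply, Finsupp.add_apply]
      rcases eq_or_ne j i with rfl | hj
      · simp only [Finsupp.single_eq_same, hm]
        omega
      · simp [Finsupp.single_eq_of_ne' (Ne.symm hj)]
    -- Pascal identity
    have hiS : i ∈ α.support := Finsupp.mem_support_iff.mpr hα
    have hsub : (α - Finsupp.single i 1).support ⊆ α.support := Finsupp.support_tsub
    have hpascal : binom (Finsupp.single i 1 + β) α = binom β (α - Finsupp.single i 1) + binom β α := by
      rw [binom_eq_prod _ _ (subset_rfl (a := α.support)),
        binom_eq_prod _ _ hsub,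
        binom_eq_prod (β := β) (α := α) subset_rfl]
      rw [← Finset.mul_prod_erase _ _ hiS, ← Finset.mul_prod_erase _ _ hiS,
        ← Finset.mul_prod_erase _ _ hiS]
      have h1 : ∀ j ∈ α.support.erase i, (Finsupp.single i 1 + β : x →₀ ℕ) j = β j := by
        intro j hj
        have hji := Finset.ne_of_mem_erase hj
        simp [Finsupp.single_eq_of_ne' (Ne.symm hji)]
      have h2 : ∀ j ∈ α.support.erase i, (α - Finsupp.single i 1 : x →₀ ℕ) j = α j := by
        intro j hj
        have hji := Finset.ne_of_mem_erase hj
        simp [Finsupp.tsub_apply, Finsupp.single_eq_of_ne' (Ne.symm hji)]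
      have e1 : ∏ j ∈ α.support.erase i, ((Finsupp.single i 1 + β : x →₀ ℕ) j).choose (α j)
          = ∏ j ∈ α.support.erase i, (β j).choose (α j) :=
        Finset.prod_congr rfl fun j hj => by rw [h1 j hj]
      have e2 : ∏ j ∈ α.support.erase i, (β j).choose ((α - Finsupp.single i 1 : x →₀ ℕ) j)
          = ∏ j ∈ α.support.erase i, (β j).choose (α j) :=
        Finset.prod_congr rfl fun j hj => by rw [h2 j hj]
      rw [e1, e2]
      have hii : (Finsupp.single i 1 + β : x →₀ ℕ) i = β i + 1 := by simp [add_comm]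
      have hi2 : (α - Finsupp.single i 1 : x →₀ ℕ) i = m := by
        simp [Finsupp.tsub_apply, hm]
      rw [hii, hi2, hm, Nat.choose_succ_succ, add_mul]

    rw [hexp, hpascal]
    by_cases hβ : α i ≤ β i
    · have hexp2 : Finsupp.single i 1 + (β - α) = β - (α - Finsupp.single i 1) := by
        ext j
        simp only [Finsupp.tsub_apply, Finsupp.add_apply]
        rcases eq_or_ne j i with rfl | hj
        · simp only [Finsupp.single_eq_same, hm]
          omega
        · simp [Finsupp.single_eq_of_ne' (Ne.symm hj)]
      rw [hexp2]
      push_cast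
      rw [map_add, add_sub_cancel_right]
    · have hz : binom β α = 0 := binom_eq_zero (by
        intro hle
        exact hβ (hle i))
      rw [hz]
      simp
end MvDiffOp

namespace MvDiffOp

open MvPolynomial DiffOpAux

variable {R : Type*} [CommRing R] {x : Type*}

lemma isDiffOp_hasse_deg : ∀ (n : ℕ) (α : x →₀ ℕ), deg α = n → IsDiffOp n (hasse (R := R) α) := by
  intro n
  induction n with
  | zero =>
    intro α hα
    rw [deg_eq_zero_iff.mp hα, hasse_zero_exp]
    intro p q
    rfl
  | succ n ih =>
    intro α hα
    apply isDiffOp_succ_of_generators (Set.range (X : x → MvPolynomial x R))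
      (MvPolynomial.adjoin_range_X)
    rintro a ⟨i, rfl⟩
    rw [comm_X_hasse]
    by_cases hi : α i = 0
    · rw [if_pos hi]; exact isDiffOp_zero n
    · rw [if_neg hi]
      apply ih
      have := deg_sub_single_add_one (α := α) (i := i) hi
      omega

lemma isDiffOp_hasse {k : ℕ} {α : x →₀ ℕ} (h : deg α ≤ k) : IsDiffOp k (hasse (R := R) α) :=
  isDiffOp_mono h (isDiffOp_hasse_deg (deg α) α rfl)

lemma hasse_monomial_eq_zero {α β : x →₀ ℕ} (h : ¬ α ≤ β) (r : R) :
    hasse (R := R) α (monomial β r) = 0 := by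
  rw [hasse_monomial, binom_eq_zero h]
  simp

section Dc

variable [DecidableEq x]

/-- The operator determined by coefficients `c`. -/
noncomputable def Dc (c : (x →₀ ℕ) → MvPolynomial x R) :
    MvPolynomial x R →ₗ[R] MvPolynomial x R :=
  (basisMonomials x R).constr ℕ fun β =>
    ∑ α ∈ Finset.Iic β, c α * monomial (β - α) ((binom β α : R))

/-- Truncation of the infinite sum to a finite set of multi-indices. -/
noncomputable def ET (c : (x →₀ ℕ) → MvPolynomial x R) (T : Finset (x →₀ ℕ)) :
    MvPolynomial x R →ₗ[R] MvPolynomial x R :=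
  ∑ α ∈ T, LinearMap.mulLeft R (c α) ∘ₗ hasse α

lemma isDiffOp_ET {k : ℕ} {c : (x →₀ ℕ) → MvPolynomial x R}
    (hc : ∀ α, ¬ deg α ≤ k → c α = 0) (T : Finset (x →₀ ℕ)) :
    IsDiffOp k (ET c T) := by
  classical
  refine Finset.sum_induction _ (IsDiffOp k) (fun _ _ => isDiffOp_add) (isDiffOp_zero k) ?_
  intro α _
  by_cases h : deg α ≤ k
  · exact isDiffOp_mulLeft_comp _ (isDiffOp_hasse h)
  · rw [hc α h]
    have h0 : LinearMap.mulLeft R (0 : MvPolynomial x R) = 0 := by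
      ext q; simp
    rw [h0, LinearMap.zero_comp]
    exact isDiffOp_zero k

lemma Dc_monomial_one (c : (x →₀ ℕ) → MvPolynomial x R) (β : x →₀ ℕ) :
    Dc c (monomial β 1) = ∑ α ∈ Finset.Iic β, c α * monomial (β - α) ((binom β α : R)) := by
  have := (basisMonomials x R).constr_basis ℕ
    (fun β => ∑ α ∈ Finset.Iic β, c α * monomial (β - α) ((binom β α : R))) β
  rwa [show (basisMonomials x R) β = monomial β 1 from congrFun (coe_basisMonomials x R) β] at this

lemma ET_monomial_eq_Dc {c : (x →₀ ℕ) → MvPolynomial x R} {T : Finset (x →₀ ℕ)}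
    {β : x →₀ ℕ} (hβ : Finset.Iic β ⊆ T) (r : R) :
    ET c T (monomial β r) = Dc c (monomial β r) := by
  have hmono : monomial β r = r • monomial β (1 : R) := by
    rw [smul_monomial, smul_eq_mul, mul_one]
  rw [hmono, map_smul, map_smul, Dc_monomial_one]
  have hET : ET c T (monomial β 1) = ∑ α ∈ T, c α * hasse (R := R) α (monomial β 1) := by
    simp [ET, LinearMap.sum_apply, LinearMap.mulLeft_apply]
  rw [hET]
  have hsub : ∑ α ∈ T, c α * hasse (R := R) α (monomial β 1)
      = ∑ α ∈ Finset.Iic β, c α * hasse (R := R) α (monomial β 1) := by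
    refine (Finset.sum_subset hβ ?_).symm
    intro α _ hα
    rw [hasse_monomial_eq_zero (fun hle => hα (Finset.mem_Iic.mpr hle)), mul_zero]
  rw [hsub]
  congr 1
  refine Finset.sum_congr rfl fun α _ => ?_
  rw [hasse_monomial_one]

lemma ET_eq_Dc {c : (x →₀ ℕ) → MvPolynomial x R} {T : Finset (x →₀ ℕ)}
    {p : MvPolynomial x R} (hT : ∀ β ∈ p.support, Finset.Iic β ⊆ T) :
    ET c T p = Dc c p := by
  conv_lhs => rw [← support_sum_monomial_coeff p]
  conv_rhs => rw [← support_sum_monomial_coeff p]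
  rw [map_sum, map_sum]
  exact Finset.sum_congr rfl fun β hβ => ET_monomial_eq_Dc (hT β hβ) _

lemma isDiffOp_Dc {k : ℕ} {c : (x →₀ ℕ) → MvPolynomial x R}
    (hc : ∀ α, ¬ deg α ≤ k → c α = 0) : IsDiffOp k (Dc c) := by
  classical
  rw [isDiffOp_iff_foldComm]
  intro l hl
  apply LinearMap.ext
  intro p
  set T : Finset (x →₀ ℕ) :=
    Finset.biUnion l.sublists.toFinset
      (fun s => (s.prod * p).support.biUnion Finset.Iic) with hTdef
  have key : ∀ s : List (MvPolynomial x R), s.Sublist l →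
      Dc c (s.prod * p) = ET c T (s.prod * p) := by
    intro s hs
    refine (ET_eq_Dc fun β hβ => ?_).symm
    intro γ hγ
    refine Finset.mem_biUnion.mpr ⟨s, List.mem_toFinset.mpr (List.mem_sublists.mpr hs), ?_⟩
    exact Finset.mem_biUnion.mpr ⟨β, hβ, hγ⟩
  have h1 : foldComm l (Dc c) p = foldComm l (ET c T) p :=
    foldComm_congr l p (fun s hs => key s hs)
  have h2 : foldComm l (ET c T) = 0 :=
    isDiffOp_iff_foldComm.mp (isDiffOp_ET hc T) l hl
  rw [h1, h2]

end Dc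

end MvDiffOp

namespace MvDiffOp

open MvPolynomial DiffOpAux

variable {R : Type*} [CommRing R] {x : Type*}

lemma monomial_mem_restrict {k : ℕ} {β : x →₀ ℕ} (h : deg β ≤ k) (r : R) :
    monomial β r ∈ restrictTotalDegree x R k := by
  rw [mem_restrictTotalDegree]
  refine le_trans (totalDegree_monomial_le β r) ?_
  exact h

lemma deg_eq_totalDegree_monomial (β : x →₀ ℕ) :
    (monomial β (1 : R)).totalDegree ≤ deg β :=
  totalDegree_monomial_le β 1

/-- A differential operator of order at most `k` vanishing in degrees `≤ k` is zero. -/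
lemma isDiffOp_eq_zero_of_vanish :
    ∀ (k : ℕ) (D : MvPolynomial x R →ₗ[R] MvPolynomial x R), IsDiffOp k D →
      (∀ p ∈ restrictTotalDegree x R k, D p = 0) → D = 0 := by
  intro k
  induction k with
  | zero =>
    intro D hD hvan
    apply LinearMap.ext
    intro p
    have h1 : D (1 * p) = D 1 * p := hD 1 p
    rw [one_mul] at h1
    have h2 : D 1 = 0 := by
      apply hvan
      have : (1 : MvPolynomial x R) = monomial 0 1 := by simp
      rw [this]
      exact monomial_mem_restrict (by simp [deg]) 1
    rw [LinearMap.zero_apply, h1, h2, zero_mul]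
  | succ k ih =>
    intro D hD hvan
    -- commutators with variables vanish
    have hcomm : ∀ i : x, comm (X i) D = 0 := by
      intro i
      apply ih _ (hD (X i))
      intro p hp
      have hXp : X i * p ∈ restrictTotalDegree x R (k + 1) := by
        rw [mem_restrictTotalDegree]
        calc (X i * p).totalDegree ≤ (X i : MvPolynomial x R).totalDegree + p.totalDegree :=
              totalDegree_mul _ _
          _ ≤ 1 + k := by
              have h1 : (X i : MvPolynomial x R).totalDegree ≤ 1 := by
                rw [X]
                exact le_trans (totalDegree_monomial_le _ _) (by simp [deg_single, deg])
              have h2 : p.totalDegree ≤ k := (mem_restrictTotalDegree x k p).mp hp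
              omega
          _ = k + 1 := by omega
      have hp' : p ∈ restrictTotalDegree x R (k + 1) := by
        rw [mem_restrictTotalDegree] at hp ⊢
        omega
      show D (X i * p) - X i * D p = 0
      rw [hvan _ hXp, hvan _ hp', mul_zero, sub_zero]
    -- now all monomials are killed
    have hmono : ∀ (n : ℕ) (β : x →₀ ℕ), deg β = n → ∀ r : R, D (monomial β r) = 0 := by
      intro n
      induction n using Nat.strong_induction_on with
      | _ n ihn =>
        intro β hβ r
        by_cases hdeg : deg β ≤ k + 1
        · exact hvan _ (monomial_mem_restrict hdeg r)
        · have hβ0 : β ≠ 0 := by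
            intro h0
            rw [h0] at hdeg
            simp [deg] at hdeg
          obtain ⟨i, hi⟩ : ∃ i, β i ≠ 0 := by
            by_contra hc
            push_neg at hc
            exact hβ0 (Finsupp.ext fun i => hc i)
          set β' := β - Finsupp.single i 1 with hβ'
          have hββ' : Finsupp.single i 1 + β' = β := by
            ext j
            simp only [hβ', Finsupp.add_apply, Finsupp.tsub_apply]
            rcases eq_or_ne j i with rfl | hj
            · simp only [Finsupp.single_eq_same]
              omega
            · simp [Finsupp.single_eq_of_ne' (Ne.symm hj)]
          have hsplit : monomial β r = X i * monomial β' r := by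
            rw [X, monomial_mul, one_mul, hββ']
          have hc := congrArg (fun E : MvPolynomial x R →ₗ[R] MvPolynomial x R =>
            E (monomial β' r)) (hcomm i)
          simp only [comm_apply, LinearMap.zero_apply] at hc
          have hdeg' : deg β' + 1 = deg β := deg_sub_single_add_one hi
          have hD' : D (monomial β' r) = 0 := ihn (deg β') (by omega) β' rfl r
          rw [hsplit]
          have := sub_eq_zero.mp hc
          rw [this, hD', mul_zero]
    apply LinearMap.ext
    intro p
    conv_lhs => rw [← support_sum_monomial_coeff p]
    rw [map_sum, LinearMap.zero_apply]
    exact Finset.sum_eq_zero fun β _ => hmono (deg β) β rfl _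

end MvDiffOp

namespace MvDiffOp

open MvPolynomial DiffOpAux

variable {R : Type*} [CommRing R] {x : Type*}

lemma coe_basisRestrictSupport (s : Set (x →₀ ℕ)) (β : x →₀ ℕ) (hβ : β ∈ s) :
    ((basisRestrictSupport R s ⟨β, hβ⟩ : restrictSupport R s) : MvPolynomial x R)
      = monomial β 1 := by
  classical
  have hmem : (monomial β (1 : R)) ∈ restrictSupport R s := by
    rw [← single_eq_monomial]
    exact Finsupp.single_mem_supported R 1 hβ
  have h : basisRestrictSupport R s ⟨β, hβ⟩ = (⟨monomial β 1, hmem⟩ : restrictSupport R s) := by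
    rw [Module.Basis.apply_eq_iff]
    ext γ
    show Finsupp.subtypeDomain (· ∈ s) (Finsupp.single β (1 : R)) γ
        = Finsupp.single (⟨β, hβ⟩ : s) (1 : R) γ
    rw [Finsupp.subtypeDomain_apply, Finsupp.single_apply, Finsupp.single_apply]
    simp [Subtype.ext_iff]
  exact congrArg Subtype.val h

lemma mem_restrict_set {k : ℕ} {β : x →₀ ℕ} (h : deg β ≤ k) :
    β ∈ { n : x →₀ ℕ | (n.sum fun _ e => e) ≤ k } := h

/-- Linear maps out of `restrictTotalDegree` are determined by values on monomials. -/
lemma hom_ext_restrict {M : Type*} [AddCommGroup M] [Module R M] {k : ℕ}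
    {f g : restrictTotalDegree x R k →ₗ[R] M}
    (h : ∀ (β : x →₀ ℕ) (hβ : deg β ≤ k),
      f ⟨monomial β 1, monomial_mem_restrict hβ 1⟩
        = g ⟨monomial β 1, monomial_mem_restrict hβ 1⟩) : f = g := by
  apply (basisRestrictSupport R { n : x →₀ ℕ | (n.sum fun _ e => e) ≤ k }).ext
  rintro ⟨β, hβ⟩
  have hdeg : deg β ≤ k := hβ
  have hcoe := coe_basisRestrictSupport (R := R) { n : x →₀ ℕ | (n.sum fun _ e => e) ≤ k } β hβ
  have heq : basisRestrictSupport R { n : x →₀ ℕ | (n.sum fun _ e => e) ≤ k } ⟨β, hβ⟩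
      = (⟨monomial β 1, monomial_mem_restrict hdeg 1⟩ : restrictTotalDegree x R k) :=
    Subtype.ext hcoe
  rw [heq]
  exact h β hdeg

variable [DecidableEq x]

/-- Triangular inversion: coefficients for the operator extending `ψ` on monomials. -/
noncomputable def cRec (ψ : (x →₀ ℕ) → MvPolynomial x R) : (x →₀ ℕ) → MvPolynomial x R
  | α => ψ α - ∑ γ ∈ ((Finset.Iic α).erase α).attach,
      cRec ψ γ.1 * monomial (α - γ.1) ((binom α γ.1 : R))
  termination_by α => deg α
  decreasing_by
    rename_i hγmem
    have h2 := γ.2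
    rw [Finset.mem_erase, Finset.mem_Iic] at h2
    exact deg_lt_of_lt h2.2 h2.1

lemma cRec_spec (ψ : (x →₀ ℕ) → MvPolynomial x R) (α : x →₀ ℕ) :
    ∑ γ ∈ Finset.Iic α, cRec ψ γ * monomial (α - γ) ((binom α γ : R)) = ψ α := by
  have hattach : ∑ γ ∈ ((Finset.Iic α).erase α).attach,
      cRec ψ γ.1 * monomial (α - γ.1) ((binom α γ.1 : R))
      = ∑ γ ∈ (Finset.Iic α).erase α, cRec ψ γ * monomial (α - γ) ((binom α γ : R)) :=
    Finset.sum_attach _ (fun γ => cRec ψ γ * monomial (α - γ) ((binom α γ : R)))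
  have hself : cRec ψ α * monomial (α - α) ((binom α α : R)) = cRec ψ α := by
    rw [tsub_self, binom_self]
    simp
  have hmem : α ∈ Finset.Iic α := Finset.mem_Iic.mpr le_rfl
  rw [← Finset.add_sum_erase _ _ hmem, hself, ← hattach]
  rw [show cRec ψ α = ψ α - ∑ γ ∈ ((Finset.Iic α).erase α).attach,
      cRec ψ γ.1 * monomial (α - γ.1) ((binom α γ.1 : R)) from by rw [cRec]]
  ring

end MvDiffOp

/-- Restriction to the span of monomials of degree at most `k` is a bijection from
differential operators of order `≤ k` on the polynomial algebra `R[x]` to linear maps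
from that span into `R[x]`.  (The restriction map is visibly `R`-linear, so this is an
isomorphism of `R`-modules.) -/
theorem stmt_6 {R : Type*} [CommRing R] (x : Type*) (k : ℕ) :
    Function.Bijective
      (fun D : {D : MvPolynomial x R →ₗ[R] MvPolynomial x R // IsDiffOp k D} =>
        (D.1 ∘ₗ (MvPolynomial.restrictTotalDegree x R k).subtype :
          MvPolynomial.restrictTotalDegree x R k →ₗ[R] MvPolynomial x R)) := by
  classical
  constructor
  · rintro ⟨D₁, hD₁⟩ ⟨D₂, hD₂⟩ h
    simp only at h
    apply Subtype.ext
    show D₁ = D₂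
    have hvan : ∀ p ∈ MvPolynomial.restrictTotalDegree x R k, (D₁ - D₂) p = 0 := by
      intro p hp
      have h2 := congrArg
        (fun f : MvPolynomial.restrictTotalDegree x R k →ₗ[R] MvPolynomial x R =>
          f ⟨p, hp⟩) h
      simp only [LinearMap.comp_apply, Submodule.subtype_apply] at h2
      rw [LinearMap.sub_apply, sub_eq_zero]
      exact h2
    have hz := MvDiffOp.isDiffOp_eq_zero_of_vanish k (D₁ - D₂)
      (DiffOpAux.isDiffOp_sub hD₁ hD₂) hvan
    exact sub_eq_zero.mp hz
  · intro φ
    set ψ : (x →₀ ℕ) → MvPolynomial x R := fun α =>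
      if h : MvDiffOp.deg α ≤ k then
        φ ⟨MvPolynomial.monomial α 1, MvDiffOp.monomial_mem_restrict h 1⟩
      else 0 with hψ
    set c : (x →₀ ℕ) → MvPolynomial x R := fun α =>
      if MvDiffOp.deg α ≤ k then MvDiffOp.cRec ψ α else 0 with hc
    have hvan : ∀ α, ¬ MvDiffOp.deg α ≤ k → c α = 0 := by
      intro α hα
      simp [hc, hα]
    refine ⟨⟨MvDiffOp.Dc c, MvDiffOp.isDiffOp_Dc hvan⟩, ?_⟩
    simp only
    apply MvDiffOp.hom_ext_restrict
    intro β hβ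
    rw [LinearMap.comp_apply, Submodule.subtype_apply]
    show MvDiffOp.Dc c (MvPolynomial.monomial β 1) = _
    rw [MvDiffOp.Dc_monomial_one]
    have hcong : ∑ γ ∈ Finset.Iic β,
          c γ * MvPolynomial.monomial (β - γ) ((MvDiffOp.binom β γ : R))
        = ∑ γ ∈ Finset.Iic β,
          MvDiffOp.cRec ψ γ * MvPolynomial.monomial (β - γ) ((MvDiffOp.binom β γ : R)) := by
      refine Finset.sum_congr rfl fun γ hγ => ?_
      have hdegγ : MvDiffOp.deg γ ≤ k :=
        le_trans (MvDiffOp.deg_mono (Finset.mem_Iic.mp hγ)) hβ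
      rw [hc]
      simp [hdegγ]
    rw [hcong, MvDiffOp.cRec_spec, hψ]
    simp [hβ]
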